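/- Let α≥0 and f∈M_σ(α,φ): f bi-univalent on 𝔻 with (1−α)zf'(z)/f(z)+α(1+zf''(z)/f'(z)) ≺ φ(z), and the same subordination for g=f⁻¹, where φ(z)=1+B₁z+B₂z²+⋯ with B₁>0 and B₁²+(1+α)(B₁−B₂)≠0. Then |a₂| ≤ B₁√B₁ / √((1+α)|B₁²+(1+α)(B₁−B₂)|). -/

import Mathlib

open Metric Complex Filter Topology

section Helpers
variable {A B u ψ : ℂ → ℂ} {x : ℂ}

lemma AnalyticAt.deriv' (h : AnalyticAt ℂ A x) : AnalyticAt ℂ (deriv A) x := by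
  obtain ⟨s, hs, hos⟩ := h.eventually_analyticAt.exists_mem
  exact (AnalyticOnNhd.deriv (fun y hy => hos y hy)) x (mem_of_mem_nhds hs)

lemma ev_deriv_mul (hA : AnalyticAt ℂ A x) (hB : AnalyticAt ℂ B x) :
    deriv (fun z => A z * B z) =ᶠ[𝓝 x] fun z => deriv A z * B z + A z * deriv B z := by
  filter_upwards [hA.eventually_analyticAt, hB.eventually_analyticAt] with y hAy hBy
  exact deriv_mul hAy.differentiableAt hBy.differentiableAt

lemma d2_mul (hA : AnalyticAt ℂ A x) (hB : AnalyticAt ℂ B x) :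
    deriv (deriv (fun z => A z * B z)) x =
      deriv (deriv A) x * B x + 2 * (deriv A x * deriv B x) + A x * deriv (deriv B) x := by
  rw [(ev_deriv_mul hA hB).deriv_eq,
    deriv_fun_add (f := fun z => deriv A z * B z) (g := fun z => A z * deriv B z) ((hA.deriv'.mul hB).differentiableAt) ((hA.mul hB.deriv').differentiableAt),
    deriv_fun_mul hA.deriv'.differentiableAt hB.differentiableAt,
    deriv_fun_mul hA.differentiableAt hB.deriv'.differentiableAt]
  ring

lemma ev_d2_mul (hA : AnalyticAt ℂ A x) (hB : AnalyticAt ℂ B x) :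
    deriv (deriv (fun z => A z * B z)) =ᶠ[𝓝 x]
      fun z => deriv (deriv A) z * B z + 2 * (deriv A z * deriv B z)
        + A z * deriv (deriv B) z := by
  filter_upwards [hA.eventually_analyticAt, hB.eventually_analyticAt] with y hAy hBy
  exact d2_mul hAy hBy

lemma d3_mul (hA : AnalyticAt ℂ A x) (hB : AnalyticAt ℂ B x) :
    deriv (deriv (deriv (fun z => A z * B z))) x =
      deriv (deriv (deriv A)) x * B x + 3 * (deriv (deriv A) x * deriv B x)
        + 3 * (deriv A x * deriv (deriv B) x) + A x * deriv (deriv (deriv B)) x := by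
  rw [(ev_d2_mul hA hB).deriv_eq]
  have h1 : DifferentiableAt ℂ (fun z => deriv (deriv A) z * B z) x :=
    (hA.deriv'.deriv'.mul hB).differentiableAt
  have h2 : DifferentiableAt ℂ (fun z => 2 * (deriv A z * deriv B z)) x :=
    (analyticAt_const.mul (hA.deriv'.mul hB.deriv')).differentiableAt
  have h3 : DifferentiableAt ℂ (fun z => A z * deriv (deriv B) z) x :=
    (hA.mul hB.deriv'.deriv').differentiableAt
  rw [deriv_fun_add (f := fun z => deriv (deriv A) z * B z + 2 * (deriv A z * deriv B z)) (h1.add h2) h3, deriv_fun_add h1 h2,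
    deriv_fun_mul hA.deriv'.deriv'.differentiableAt hB.differentiableAt,
    deriv_const_mul (d := fun z => deriv A z * deriv B z) (2:ℂ) ((hA.deriv'.mul hB.deriv').differentiableAt),
    deriv_fun_mul hA.deriv'.differentiableAt hB.deriv'.differentiableAt,
    deriv_fun_mul hA.differentiableAt hB.deriv'.deriv'.differentiableAt]
  ring

end Helpers

section Helpers2
variable {A B u ψ : ℂ → ℂ} {x : ℂ} {c : ℂ}


lemma ev_deriv_comp (hu : AnalyticAt ℂ u x) (hψ : AnalyticAt ℂ ψ (u x)) :
    deriv (fun z => ψ (u z)) =ᶠ[𝓝 x] fun z => deriv ψ (u z) * deriv u z := by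
  filter_upwards [hu.eventually_analyticAt, hu.continuousAt.eventually hψ.eventually_analyticAt]
    with y huy hψy
  exact deriv_comp y hψy.differentiableAt huy.differentiableAt

lemma d2_comp (hu : AnalyticAt ℂ u x) (hψ : AnalyticAt ℂ ψ (u x)) :
    deriv (deriv (fun z => ψ (u z))) x =
      deriv (deriv ψ) (u x) * (deriv u x * deriv u x) + deriv ψ (u x) * deriv (deriv u) x := by
  have hc : DifferentiableAt ℂ (fun z => deriv ψ (u z)) x := (hψ.deriv'.comp hu).differentiableAt
  have hcc : deriv (fun z => deriv ψ (u z)) x = deriv (deriv ψ) (u x) * deriv u x :=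
    deriv_comp x hψ.deriv'.differentiableAt hu.differentiableAt
  rw [(ev_deriv_comp hu hψ).deriv_eq,
    deriv_fun_mul hc hu.deriv'.differentiableAt, hcc]
  ring

lemma ev_d2_comp (hu : AnalyticAt ℂ u x) (hψ : AnalyticAt ℂ ψ (u x)) :
    deriv (deriv (fun z => ψ (u z))) =ᶠ[𝓝 x]
      fun z => deriv (deriv ψ) (u z) * (deriv u z * deriv u z)
        + deriv ψ (u z) * deriv (deriv u) z := by
  filter_upwards [hu.eventually_analyticAt, hu.continuousAt.eventually hψ.eventually_analyticAt]
    with y huy hψy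
  exact d2_comp huy hψy

lemma d3_comp (hu : AnalyticAt ℂ u x) (hψ : AnalyticAt ℂ ψ (u x)) :
    deriv (deriv (deriv (fun z => ψ (u z)))) x =
      deriv (deriv (deriv ψ)) (u x) * (deriv u x * deriv u x * deriv u x)
        + 3 * (deriv (deriv ψ) (u x) * deriv u x * deriv (deriv u) x)
        + deriv ψ (u x) * deriv (deriv (deriv u)) x := by
  rw [(ev_d2_comp hu hψ).deriv_eq]
  have h1 : DifferentiableAt ℂ (fun z => deriv (deriv ψ) (u z) * (deriv u z * deriv u z)) x :=
    ((hψ.deriv'.deriv'.comp hu).mul (hu.deriv'.mul hu.deriv')).differentiableAt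
  have h2 : DifferentiableAt ℂ (fun z => deriv ψ (u z) * deriv (deriv u) z) x :=
    ((hψ.deriv'.comp hu).mul hu.deriv'.deriv').differentiableAt
  have hc1 : DifferentiableAt ℂ (fun z => deriv (deriv ψ) (u z)) x :=
    (hψ.deriv'.deriv'.comp hu).differentiableAt
  have hc2 : DifferentiableAt ℂ (fun z => deriv ψ (u z)) x :=
    (hψ.deriv'.comp hu).differentiableAt
  have hcc1 : deriv (fun z => deriv (deriv ψ) (u z)) x
      = deriv (deriv (deriv ψ)) (u x) * deriv u x :=
    deriv_comp x hψ.deriv'.deriv'.differentiableAt hu.differentiableAt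
  have hcc2 : deriv (fun z => deriv ψ (u z)) x = deriv (deriv ψ) (u x) * deriv u x :=
    deriv_comp x hψ.deriv'.differentiableAt hu.differentiableAt
  rw [deriv_fun_add h1 h2,
    deriv_fun_mul (d := fun z => deriv u z * deriv u z) hc1 ((hu.deriv'.mul hu.deriv').differentiableAt), hcc1,
    deriv_fun_mul hu.deriv'.differentiableAt hu.deriv'.differentiableAt,
    deriv_fun_mul hc2 hu.deriv'.deriv'.differentiableAt, hcc2]
  ring

lemma ev_deriv_add (hA : AnalyticAt ℂ A x) (hB : AnalyticAt ℂ B x) :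
    deriv (fun z => A z + B z) =ᶠ[𝓝 x] fun z => deriv A z + deriv B z := by
  filter_upwards [hA.eventually_analyticAt, hB.eventually_analyticAt] with y hAy hBy
  exact deriv_add hAy.differentiableAt hBy.differentiableAt

lemma d2_add (hA : AnalyticAt ℂ A x) (hB : AnalyticAt ℂ B x) :
    deriv (deriv (fun z => A z + B z)) x = deriv (deriv A) x + deriv (deriv B) x := by
  rw [(ev_deriv_add hA hB).deriv_eq,
    deriv_fun_add hA.deriv'.differentiableAt hB.deriv'.differentiableAt]

lemma ev_d2_add (hA : AnalyticAt ℂ A x) (hB : AnalyticAt ℂ B x) :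
    deriv (deriv (fun z => A z + B z)) =ᶠ[𝓝 x] fun z => deriv (deriv A) z + deriv (deriv B) z := by
  filter_upwards [hA.eventually_analyticAt, hB.eventually_analyticAt] with y hAy hBy
  exact d2_add hAy hBy

lemma d3_add (hA : AnalyticAt ℂ A x) (hB : AnalyticAt ℂ B x) :
    deriv (deriv (deriv (fun z => A z + B z))) x =
      deriv (deriv (deriv A)) x + deriv (deriv (deriv B)) x := by
  rw [(ev_d2_add hA hB).deriv_eq,
    deriv_fun_add hA.deriv'.deriv'.differentiableAt hB.deriv'.deriv'.differentiableAt]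

lemma ev_deriv_cmul (hA : AnalyticAt ℂ A x) :
    deriv (fun z => c * A z) =ᶠ[𝓝 x] fun z => c * deriv A z := by
  filter_upwards [hA.eventually_analyticAt] with y hAy
  exact deriv_const_mul c hAy.differentiableAt

lemma d2_cmul (hA : AnalyticAt ℂ A x) :
    deriv (deriv (fun z => c * A z)) x = c * deriv (deriv A) x := by
  rw [(ev_deriv_cmul hA).deriv_eq, deriv_const_mul c hA.deriv'.differentiableAt]

lemma ev_d2_cmul (hA : AnalyticAt ℂ A x) :
    deriv (deriv (fun z => c * A z)) =ᶠ[𝓝 x] fun z => c * deriv (deriv A) z := by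
  filter_upwards [hA.eventually_analyticAt] with y hAy; exact d2_cmul hAy

lemma d3_cmul (hA : AnalyticAt ℂ A x) :
    deriv (deriv (deriv (fun z => c * A z))) x = c * deriv (deriv (deriv A)) x := by
  rw [(ev_d2_cmul hA).deriv_eq, deriv_const_mul c hA.deriv'.deriv'.differentiableAt]

end Helpers2

section ZM
variable {B : ℂ → ℂ} {x : ℂ}

lemma idd1 : deriv (fun z : ℂ => z) = fun _ : ℂ => (1:ℂ) := funext fun y => deriv_id y
lemma idd2 : deriv (deriv (fun z : ℂ => z)) = fun _ : ℂ => (0:ℂ) := by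
  rw [idd1]; exact funext fun y => deriv_const y 1
lemma idd3 : deriv (deriv (deriv (fun z : ℂ => z))) = fun _ : ℂ => (0:ℂ) := by
  rw [idd2]; exact funext fun y => deriv_const y 0

lemma d2_zmul (hB : AnalyticAt ℂ B x) :
    deriv (deriv (fun z => z * B z)) x = 2 * deriv B x + x * deriv (deriv B) x := by
  rw [d2_mul (A := fun z : ℂ => z) analyticAt_id hB]; simp only [idd1, deriv_const']; beta_reduce; ring

lemma d3_zmul (hB : AnalyticAt ℂ B x) :
    deriv (deriv (deriv (fun z => z * B z))) x =
      3 * deriv (deriv B) x + x * deriv (deriv (deriv B)) x := by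
  rw [d3_mul (A := fun z : ℂ => z) analyticAt_id hB]; simp only [idd1, deriv_const']; beta_reduce; ring

end ZM


lemma coeff_eqs (f u φ : ℂ → ℂ) (α : ℝ)
    (hfa : AnalyticAt ℂ f 0) (hua : AnalyticAt ℂ u 0) (hφa : AnalyticAt ℂ φ 0)
    (hf0 : f 0 = 0) (hf1 : deriv f 0 = 1) (hu0 : u 0 = 0) (hφ0 : φ 0 = 1)
    (hfne : ∀ᶠ z in 𝓝 (0:ℂ), z ≠ 0 → f z ≠ 0)
    (heq : ∀ᶠ z in 𝓝 (0:ℂ), z ≠ 0 →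
      (1 - (α:ℂ)) * (z * deriv f z / f z)
        + (α:ℂ) * (1 + z * deriv (deriv f) z / deriv f z) = φ (u z)) :
    (1 + (α:ℂ)) * deriv (deriv f) 0 = 2 * deriv φ 0 * deriv u 0 ∧
    (2 + 4*(α:ℂ)) * deriv (deriv (deriv f)) 0 + 3 * (deriv (deriv f) 0)^2
      = 3 * deriv (deriv φ) 0 * (deriv u 0)^2 + 3 * deriv φ 0 * deriv (deriv u) 0
        + 9 * deriv φ 0 * deriv u 0 * deriv (deriv f) 0 := by
  have hf' := hfa.deriv'
  have hf'' := hf'.deriv'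
  have hφu : AnalyticAt ℂ φ (u 0) := by rwa [hu0]
  have hΦ : AnalyticAt ℂ (fun z => φ (u z)) 0 := hφu.comp hua
  have hd1 : ∀ᶠ z in 𝓝 (0:ℂ), deriv f z ≠ 0 :=
    hf'.continuousAt.eventually_ne (by rw [hf1]; exact one_ne_zero)
  -- the polynomialized functional equation
  have hFG : (fun z => (1 - (α:ℂ)) * (z * (deriv f z * deriv f z))
        + ((α:ℂ) * (f z * deriv f z) + (α:ℂ) * (z * (deriv (deriv f) z * f z))))
      =ᶠ[𝓝 (0:ℂ)] fun z => φ (u z) * (f z * deriv f z) := by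
    filter_upwards [heq, hfne, hd1] with z hEq hfz hdz
    by_cases hz : z = 0
    · subst hz; simp [hf0]
    · have e := hEq hz
      have h1 := hfz hz
      field_simp at e
      linear_combination e
  have h2 := (hFG.deriv).deriv_eq
  have h3 := ((hFG.deriv).deriv).deriv_eq
  -- analyticity of the pieces
  have hW : AnalyticAt ℂ (fun z => deriv f z * deriv f z) 0 := hf'.mul hf'
  have hT1 : AnalyticAt ℂ (fun z => z * (deriv f z * deriv f z)) 0 := analyticAt_id.mul hW
  have hT2 : AnalyticAt ℂ (fun z => f z * deriv f z) 0 := hfa.mul hf'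
  have hV : AnalyticAt ℂ (fun z => deriv (deriv f) z * f z) 0 := hf''.mul hfa
  have hT3 : AnalyticAt ℂ (fun z => z * (deriv (deriv f) z * f z)) 0 := analyticAt_id.mul hV
  -- values
  have hWv : deriv (fun z => deriv f z * deriv f z) 0 = 2 * deriv (deriv f) 0 := by
    rw [deriv_fun_mul hf'.differentiableAt hf'.differentiableAt, hf1]; ring
  have hWd2 : deriv (deriv (fun z => deriv f z * deriv f z)) 0
      = 2 * deriv (deriv (deriv f)) 0 + 2 * (deriv (deriv f) 0)^2 := by
    rw [d2_mul hf' hf', hf1]; ring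
  have hT2v : deriv (fun z => f z * deriv f z) 0 = 1 := by
    rw [deriv_fun_mul hfa.differentiableAt hf'.differentiableAt, hf0, hf1]; ring
  have hT2d2 : deriv (deriv (fun z => f z * deriv f z)) 0 = 3 * deriv (deriv f) 0 := by
    rw [d2_mul hfa hf', hf0, hf1]; ring
  have hT2d3 : deriv (deriv (deriv (fun z => f z * deriv f z))) 0
      = 4 * deriv (deriv (deriv f)) 0 + 3 * (deriv (deriv f) 0)^2 := by
    rw [d3_mul hfa hf', hf0, hf1]; ring
  have hVv : deriv (fun z => deriv (deriv f) z * f z) 0 = deriv (deriv f) 0 := by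
    rw [deriv_fun_mul hf''.differentiableAt hfa.differentiableAt, hf0, hf1]; ring
  have hVd2 : deriv (deriv (fun z => deriv (deriv f) z * f z)) 0
      = 2 * deriv (deriv (deriv f)) 0 + (deriv (deriv f) 0)^2 := by
    rw [d2_mul hf'' hfa, hf0, hf1]; ring
  -- composition values
  have hΦv : deriv (fun z => φ (u z)) 0 = deriv φ 0 * deriv u 0 := by
    have := deriv_comp 0 hφu.differentiableAt hua.differentiableAt
    rw [hu0] at this; exact this
  have hΦd2 : deriv (deriv (fun z => φ (u z))) 0
      = deriv (deriv φ) 0 * (deriv u 0 * deriv u 0) + deriv φ 0 * deriv (deriv u) 0 := by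
    have := d2_comp hua hφu
    rw [hu0] at this; exact this
  -- second order equation
  have e2 : (4 + (α:ℂ)) * deriv (deriv f) 0
      = 2 * deriv φ 0 * deriv u 0 + 3 * deriv (deriv f) 0 := by
    have lhs2 : deriv (deriv (fun z => (1 - (α:ℂ)) * (z * (deriv f z * deriv f z))
        + ((α:ℂ) * (f z * deriv f z) + (α:ℂ) * (z * (deriv (deriv f) z * f z))))) 0
        = (4 + (α:ℂ)) * deriv (deriv f) 0 := by
      rw [d2_add (A := fun z => (1 - (α:ℂ)) * (z * (deriv f z * deriv f z)))
            (B := fun z => (α:ℂ) * (f z * deriv f z) + (α:ℂ) * (z * (deriv (deriv f) z * f z)))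
            (analyticAt_const.mul hT1)
            ((analyticAt_const.mul hT2).add (analyticAt_const.mul hT3)),
          d2_add (A := fun z => (α:ℂ) * (f z * deriv f z))
            (B := fun z => (α:ℂ) * (z * (deriv (deriv f) z * f z)))
            (analyticAt_const.mul hT2) (analyticAt_const.mul hT3),
          d2_cmul hT1, d2_cmul hT2, d2_cmul hT3, d2_zmul hW, d2_zmul hV,
          hT2d2, hWv, hVv]
      ring
    have rhs2 : deriv (deriv (fun z => φ (u z) * (f z * deriv f z))) 0
        = 2 * deriv φ 0 * deriv u 0 + 3 * deriv (deriv f) 0 := by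
      rw [d2_mul hΦ hT2, hΦv, hΦd2, hT2v, hT2d2, hf0, hf1, hu0, hφ0]
      ring
    rw [lhs2, rhs2] at h2; exact h2
  have e3 : (6 + 4*(α:ℂ)) * deriv (deriv (deriv f)) 0 + 6 * (deriv (deriv f) 0)^2
      = 3 * (deriv (deriv φ) 0 * (deriv u 0 * deriv u 0) + deriv φ 0 * deriv (deriv u) 0)
        + 9 * (deriv φ 0 * deriv u 0) * deriv (deriv f) 0
        + (4 * deriv (deriv (deriv f)) 0 + 3 * (deriv (deriv f) 0)^2) := by
    have lhs3 : deriv (deriv (deriv (fun z => (1 - (α:ℂ)) * (z * (deriv f z * deriv f z))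
        + ((α:ℂ) * (f z * deriv f z) + (α:ℂ) * (z * (deriv (deriv f) z * f z)))))) 0
        = (6 + 4*(α:ℂ)) * deriv (deriv (deriv f)) 0 + 6 * (deriv (deriv f) 0)^2 := by
      rw [d3_add (A := fun z => (1 - (α:ℂ)) * (z * (deriv f z * deriv f z)))
            (B := fun z => (α:ℂ) * (f z * deriv f z) + (α:ℂ) * (z * (deriv (deriv f) z * f z)))
            (analyticAt_const.mul hT1)
            ((analyticAt_const.mul hT2).add (analyticAt_const.mul hT3)),
          d3_add (A := fun z => (α:ℂ) * (f z * deriv f z))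
            (B := fun z => (α:ℂ) * (z * (deriv (deriv f) z * f z)))
            (analyticAt_const.mul hT2) (analyticAt_const.mul hT3),
          d3_cmul hT1, d3_cmul hT2, d3_cmul hT3, d3_zmul hW, d3_zmul hV,
          hT2d3, hWd2, hVd2]
      ring
    have rhs3 : deriv (deriv (deriv (fun z => φ (u z) * (f z * deriv f z)))) 0
        = 3 * (deriv (deriv φ) 0 * (deriv u 0 * deriv u 0) + deriv φ 0 * deriv (deriv u) 0)
          + 9 * (deriv φ 0 * deriv u 0) * deriv (deriv f) 0
          + (4 * deriv (deriv (deriv f)) 0 + 3 * (deriv (deriv f) 0)^2) := by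
      rw [d3_mul hΦ hT2, hΦv, hΦd2, hT2v, hT2d2, hT2d3, hf0, hf1, hu0, hφ0]
      ring
    rw [lhs3, rhs3] at h3; exact h3
  constructor
  · linear_combination e2
  · linear_combination e3


lemma idd1' : deriv (fun z : ℂ => z) = fun _ : ℂ => (1:ℂ) := funext fun y => deriv_id y

lemma inv_coeffs (f g : ℂ → ℂ) (hfa : AnalyticAt ℂ f 0) (hga : AnalyticAt ℂ g 0)
    (hf0 : f 0 = 0) (hf1 : deriv f 0 = 1) (hinv : ∀ᶠ z in 𝓝 (0:ℂ), g (f z) = z) :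
    g 0 = 0 ∧ deriv g 0 = 1 ∧ deriv (deriv g) 0 = - deriv (deriv f) 0 ∧
      deriv (deriv (deriv g)) 0
        = 3 * (deriv (deriv f) 0)^2 - deriv (deriv (deriv f)) 0 := by
  have hg0 : g 0 = 0 := by have := hinv.self_of_nhds; rwa [hf0] at this
  have hgf : AnalyticAt ℂ g (f 0) := by rwa [hf0]
  have hE : (fun z => g (f z)) =ᶠ[𝓝 (0:ℂ)] fun z => z := hinv
  have h1 := hE.deriv_eq
  have h2 := (hE.deriv).deriv_eq
  have h3 := ((hE.deriv).deriv).deriv_eq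
  have hc1 : deriv (fun z => g (f z)) 0 = deriv g (f 0) * deriv f 0 :=
    deriv_comp 0 hgf.differentiableAt hfa.differentiableAt
  rw [hc1, hf0, hf1, idd1'] at h1
  simp only [deriv_const'] at h1 h2 h3
  rw [idd1'] at h2 h3
  simp only [deriv_const'] at h2 h3
  have hg1 : deriv g 0 = 1 := by rw [mul_one] at h1; exact h1
  rw [d2_comp hfa hgf, hf0, hf1, hg1] at h2
  rw [d3_comp hfa hgf, hf0, hf1, hg1] at h3
  refine ⟨hg0, hg1, ?_, ?_⟩
  · linear_combination h2
  · linear_combination h3 - 3 * deriv (deriv f) 0 * h2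


lemma mobius_normsq (a w : ℂ) :
    Complex.normSq (1 - (starRingEnd ℂ) a * w) - Complex.normSq (w - a)
      = (1 - Complex.normSq a) * (1 - Complex.normSq w) := by
  simp only [Complex.normSq_apply, Complex.sub_re, Complex.sub_im, Complex.mul_re,
    Complex.mul_im, Complex.one_re, Complex.one_im, Complex.conj_re, Complex.conj_im]
  ring

lemma schwarz_pick2 (u : ℂ → ℂ) (hu : AnalyticOnNhd ℂ u (ball (0:ℂ) 1))
    (hmap : Set.MapsTo u (ball (0:ℂ) 1) (ball (0:ℂ) 1)) (hu0 : u 0 = 0) :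
    ‖deriv u 0‖ ≤ 1 ∧ ‖deriv (deriv u) 0‖ ≤ 2 * (1 - ‖deriv u 0‖^2) := by
  have h0b : (0:ℂ) ∈ ball (0:ℂ) 1 := by simp
  have hd : DifferentiableOn ℂ u (ball (0:ℂ) 1) := hu.differentiableOn
  set h : ℂ → ℂ := dslope u 0 with hh
  have hdh : DifferentiableOn ℂ h (ball (0:ℂ) 1) :=
    (differentiableOn_dslope (ball_mem_nhds _ one_pos)).mpr hd
  have hmap' : Set.MapsTo u (ball (0:ℂ) 1) (ball (u 0) 1) := by rwa [hu0]
  have hb : ∀ z ∈ ball (0:ℂ) 1, ‖h z‖ ≤ 1 := by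
    intro z hz
    simpa using Complex.norm_dslope_le_div_of_mapsTo_ball hd (hmap'.mono_right ball_subset_closedBall) hz
  have hha : AnalyticAt ℂ h 0 := by
    obtain ⟨p, hp⟩ := hu 0 h0b
    exact ⟨p.fslope, hp.has_fpower_series_dslope_fslope⟩
  have huzh : u = fun z => z * h z := by
    funext z
    have := sub_smul_dslope u 0 z
    simp only [sub_zero, smul_eq_mul, hu0] at this
    rw [hh, ← this]
  have hu1 : deriv u 0 = h 0 := (dslope_same u 0).symm
  have hu2 : deriv (deriv u) 0 = 2 * deriv h 0 := by
    conv_lhs => rw [huzh]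
    rw [d2_zmul hha]; ring
  have hh0 : ‖h 0‖ ≤ 1 := hb 0 h0b
  refine ⟨by rw [hu1]; exact hh0, ?_⟩
  rw [hu1, hu2]
  have key : ‖deriv h 0‖ ≤ 1 - ‖h 0‖^2 := by
    by_cases hcase : ∃ z₀ ∈ ball (0:ℂ) 1, 1 ≤ ‖h z₀‖
    · obtain ⟨z₀, hz₀, hge⟩ := hcase
      have hmax : IsMaxOn (norm ∘ h) (ball (0:ℂ) 1) z₀ := fun z hz => (hb z hz).trans hge
      have heq := Complex.eqOn_of_isPreconnected_of_isMaxOn_norm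
        (convex_ball (0:ℂ) 1).isPreconnected isOpen_ball hdh hz₀ hmax
      have hev : h =ᶠ[𝓝 (0:ℂ)] fun _ => h z₀ :=
        Filter.eventuallyEq_of_mem (isOpen_ball.mem_nhds h0b) heq
      rw [hev.deriv_eq, deriv_const]
      simp only [norm_zero]
      nlinarith [norm_nonneg (h 0), hh0]
    · push_neg at hcase
      set a : ℂ := h 0 with ha
      have halt : ‖a‖ < 1 := hcase 0 h0b
      have hden : ∀ w : ℂ, ‖w‖ < 1 → 1 - (starRingEnd ℂ) a * w ≠ 0 := by
        intro w hw heq0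
        have h1 : ‖(starRingEnd ℂ) a * w‖ < 1 := by
          rw [norm_mul, RCLike.norm_conj]
          nlinarith [norm_nonneg a, norm_nonneg w]
        have : (starRingEnd ℂ) a * w = 1 := by linear_combination -heq0
        rw [this] at h1; simp at h1
      set m : ℂ → ℂ := fun w => (w - a) / (1 - (starRingEnd ℂ) a * w) with hm
      have hmlt : ∀ w : ℂ, ‖w‖ < 1 → ‖m w‖ < 1 := by
        intro w hw
        have hnsq : Complex.normSq (w - a) < Complex.normSq (1 - (starRingEnd ℂ) a * w) := by
          have hid := mobius_normsq a w
          have ha2 : Complex.normSq a < 1 := by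
            rw [Complex.normSq_eq_norm_sq]; nlinarith [norm_nonneg a]
          have hw2 : Complex.normSq w < 1 := by
            rw [Complex.normSq_eq_norm_sq]; nlinarith [norm_nonneg w]
          nlinarith
        have hlt : ‖w - a‖ < ‖1 - (starRingEnd ℂ) a * w‖ := by
          have h1 : ‖w - a‖^2 < ‖1 - (starRingEnd ℂ) a * w‖^2 := by
            rw [Complex.sq_norm, Complex.sq_norm]
            exact hnsq
          exact lt_of_pow_lt_pow_left₀ 2 (norm_nonneg _) h1
        rw [hm]
        simp only [norm_div]
        rw [div_lt_one (lt_of_le_of_lt (norm_nonneg _) hlt)]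
        exact hlt
      -- the composed map
      have hM0 : m (h 0) = 0 := by rw [hm]; simp [← ha]
      have hmdiff : ∀ w : ℂ, ‖w‖ < 1 → DifferentiableAt ℂ m w := by
        intro w hw
        apply DifferentiableAt.div
        · exact (differentiableAt_id.sub_const a)
        · exact (differentiableAt_const _).sub ((differentiableAt_const _).mul differentiableAt_id)
        · exact hden w hw
      have hdM : DifferentiableOn ℂ (fun z => m (h z)) (ball (0:ℂ) 1) := by
        intro z hz
        have h1 : DifferentiableAt ℂ h z := hdh.differentiableAt (isOpen_ball.mem_nhds hz)
        have h2 : DifferentiableAt ℂ m (h z) := hmdiff _ (hcase z hz)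
        exact (h2.comp z h1).differentiableWithinAt
      have hMmaps : Set.MapsTo (fun z => m (h z)) (ball (0:ℂ) 1) (ball (0:ℂ) 1) := by
        intro z hz
        rw [mem_ball_zero_iff]
        exact hmlt _ (hcase z hz)
      have hM1 : ‖deriv (fun z => m (h z)) 0‖ ≤ 1 :=
        Complex.norm_deriv_le_one_of_mapsTo_ball hdM (fun z hz => by
          show m (h z) ∈ closedBall (m (h 0)) 1
          rw [hM0]; exact ball_subset_closedBall (hMmaps hz)) one_pos
      -- derivative of m at a
      have hsq : Complex.normSq a < 1 := by
        rw [Complex.normSq_eq_norm_sq]; nlinarith [norm_nonneg a]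
      have hne1 : (1:ℂ) - ((Complex.normSq a : ℝ) : ℂ) ≠ 0 := by
        intro hx
        have : ((1 - Complex.normSq a : ℝ) : ℂ) = 0 := by push_cast; linear_combination hx
        rw [Complex.ofReal_eq_zero] at this
        linarith
      have hca : (starRingEnd ℂ) a * a = ((Complex.normSq a : ℝ) : ℂ) := by
        rw [mul_comm]; exact Complex.mul_conj a
      have hma : HasDerivAt m ((1 - ((Complex.normSq a : ℝ) : ℂ))⁻¹) a := by
        have h1 : HasDerivAt (fun w : ℂ => w - a) 1 a := (hasDerivAt_id a).sub_const a
        have h2 : HasDerivAt (fun w : ℂ => 1 - (starRingEnd ℂ) a * w) (-(starRingEnd ℂ) a) a := by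
          simpa using ((hasDerivAt_id a).const_mul ((starRingEnd ℂ) a)).const_sub 1
        have h3 := h1.div h2 (hden a halt)
        refine h3.congr_deriv ?_
        rw [hca]
        field_simp
        ring
      have hcomp : deriv (fun z => m (h z)) 0
          = (1 - ((Complex.normSq a : ℝ) : ℂ))⁻¹ * deriv h 0 := by
        have h1 : DifferentiableAt ℂ h 0 := hdh.differentiableAt (isOpen_ball.mem_nhds h0b)
        have h2 : deriv (fun z => m (h z)) 0 = deriv m (h 0) * deriv h 0 :=
          deriv_comp (0:ℂ) (hmdiff (h 0) halt) h1
        rw [h2, ← ha, hma.deriv]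
      have habs : ‖deriv h 0‖ ≤ 1 - Complex.normSq a := by
        have h5 : deriv h 0 = (1 - ((Complex.normSq a : ℝ) : ℂ)) * deriv (fun z => m (h z)) 0 := by
          rw [hcomp]; field_simp
        rw [h5, norm_mul]
        have h6 : ‖(1:ℂ) - ((Complex.normSq a : ℝ) : ℂ)‖ = 1 - Complex.normSq a := by
          rw [show (1:ℂ) - ((Complex.normSq a : ℝ) : ℂ) = ((1 - Complex.normSq a : ℝ) : ℂ) by
            push_cast; ring]
          rw [Complex.norm_real]
          rw [Real.norm_eq_abs, _root_.abs_of_nonneg (by linarith)]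
        rw [h6]
        calc (1 - Complex.normSq a) * ‖deriv (fun z => m (h z)) 0‖
            ≤ (1 - Complex.normSq a) * 1 := by
              apply mul_le_mul_of_nonneg_left _ (by linarith)
              exact hM1
          _ = 1 - Complex.normSq a := mul_one _
      have hnsqa : Complex.normSq a = ‖a‖^2 := by
        rw [Complex.normSq_eq_norm_sq]
      rw [hnsqa] at habs
      exact habs
  calc ‖2 * deriv h 0‖ = 2 * ‖deriv h 0‖ := by rw [norm_mul]; norm_num
    _ ≤ 2 * (1 - ‖h 0‖^2) := by nlinarith

/-- n-th Taylor coefficient of `f` at `0`. -/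
noncomputable def tc (f : ℂ → ℂ) (n : ℕ) : ℂ := iteratedDeriv n f 0 / n.factorial


theorem stmt14 (f g u v φ : ℂ → ℂ) (α B₁ B₂ : ℝ) (hα : 0 ≤ α)
    (hf : AnalyticOn ℂ f (ball (0:ℂ) 1)) (hfinj : Set.InjOn f (ball (0:ℂ) 1))
    (hf0 : f 0 = 0) (hf1 : deriv f 0 = 1)
    (hg : AnalyticOn ℂ g (ball (0:ℂ) 1)) (hginj : Set.InjOn g (ball (0:ℂ) 1))
    (hinv : ∀ᶠ z in 𝓝 (0:ℂ), g (f z) = z)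
    (hu : AnalyticOn ℂ u (ball (0:ℂ) 1)) (humap : ∀ z ∈ ball (0:ℂ) 1, u z ∈ ball (0:ℂ) 1) (hu0 : u 0 = 0)
    (hv : AnalyticOn ℂ v (ball (0:ℂ) 1)) (hvmap : ∀ w ∈ ball (0:ℂ) 1, v w ∈ ball (0:ℂ) 1) (hv0 : v 0 = 0)
    (hφ : AnalyticOn ℂ φ (ball (0:ℂ) 1)) (hφ0 : φ 0 = 1)
    (hB₁ : tc φ 1 = (B₁ : ℂ)) (hB₂ : tc φ 2 = (B₂ : ℂ)) (hB₁pos : 0 < B₁)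
    (hfu : ∀ z ∈ ball (0:ℂ) 1, z ≠ 0 →
      (1 - (α : ℂ)) * (z * deriv f z / f z)
        + (α : ℂ) * (1 + z * iteratedDeriv 2 f z / deriv f z) = φ (u z))
    (hgv : ∀ w ∈ ball (0:ℂ) 1, w ≠ 0 →
      (1 - (α : ℂ)) * (w * deriv g w / g w)
        + (α : ℂ) * (1 + w * iteratedDeriv 2 g w / deriv g w) = φ (v w))
    (hne : B₁ ^ 2 + (1 + α) * (B₁ - B₂) ≠ 0) :
    ‖tc f 2‖ ≤ B₁ * Real.sqrt B₁ /
      Real.sqrt ((1 + α) * |B₁ ^ 2 + (1 + α) * (B₁ - B₂)|) := by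
  have h0b : (0:ℂ) ∈ ball (0:ℂ) 1 := by simp
  have hballn : ball (0:ℂ) 1 ∈ 𝓝 (0:ℂ) := isOpen_ball.mem_nhds h0b
  -- convert analyticity
  have hfN : AnalyticOnNhd ℂ f (ball (0:ℂ) 1) := isOpen_ball.analyticOn_iff_analyticOnNhd.mp hf
  have hgN : AnalyticOnNhd ℂ g (ball (0:ℂ) 1) := isOpen_ball.analyticOn_iff_analyticOnNhd.mp hg
  have huN : AnalyticOnNhd ℂ u (ball (0:ℂ) 1) := isOpen_ball.analyticOn_iff_analyticOnNhd.mp hu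
  have hvN : AnalyticOnNhd ℂ v (ball (0:ℂ) 1) := isOpen_ball.analyticOn_iff_analyticOnNhd.mp hv
  have hφN : AnalyticOnNhd ℂ φ (ball (0:ℂ) 1) := isOpen_ball.analyticOn_iff_analyticOnNhd.mp hφ
  have hfa := hfN 0 h0b
  have hga := hgN 0 h0b
  have hua := huN 0 h0b
  have hva := hvN 0 h0b
  have hφa := hφN 0 h0b
  have it2 : ∀ F : ℂ → ℂ, iteratedDeriv 2 F = deriv (deriv F) := by
    intro F; rw [iteratedDeriv_succ, iteratedDeriv_one]
  -- φ coefficients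
  have hP1 : deriv φ 0 = (B₁:ℂ) := by
    have h := hB₁; rw [tc, iteratedDeriv_one] at h; simpa using h
  have hP2 : deriv (deriv φ) 0 = 2*(B₂:ℂ) := by
    have h := hB₂; rw [tc, it2] at h
    have h2 : deriv (deriv φ) 0 = (B₂:ℂ) * ((2:ℕ).factorial : ℂ) := by
      rw [← h]; field_simp
    rw [h2]; norm_num; ring
  -- inverse data
  obtain ⟨hg0, hg1, r2, r3⟩ := inv_coeffs f g hfa hga hf0 hf1 hinv
  -- nonvanishing
  have hfne : ∀ᶠ z in 𝓝 (0:ℂ), z ≠ 0 → f z ≠ 0 := by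
    filter_upwards [hballn] with z hz hz0 hfz
    exact hz0 (hfinj hz h0b (by rw [hfz, hf0]))
  have hgne : ∀ᶠ z in 𝓝 (0:ℂ), z ≠ 0 → g z ≠ 0 := by
    filter_upwards [hballn] with z hz hz0 hgz
    exact hz0 (hginj hz h0b (by rw [hgz, hg0]))
  -- the functional equations
  have hequ : ∀ᶠ z in 𝓝 (0:ℂ), z ≠ 0 →
      (1 - (α:ℂ)) * (z * deriv f z / f z)
        + (α:ℂ) * (1 + z * deriv (deriv f) z / deriv f z) = φ (u z) := by
    filter_upwards [hballn] with z hz hz0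
    have h := hfu z hz hz0; rwa [it2] at h
  have heqv : ∀ᶠ z in 𝓝 (0:ℂ), z ≠ 0 →
      (1 - (α:ℂ)) * (z * deriv g z / g z)
        + (α:ℂ) * (1 + z * deriv (deriv g) z / deriv g z) = φ (v z) := by
    filter_upwards [hballn] with z hz hz0
    have h := hgv z hz hz0; rwa [it2] at h
  obtain ⟨e1, e2⟩ := coeff_eqs f u φ α hfa hua hφa hf0 hf1 hu0 hφ0 hfne hequ
  obtain ⟨eg1, eg2⟩ := coeff_eqs g v φ α hga hva hφa hg0 hg1 hv0 hφ0 hgne heqv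
  simp only [hP1, hP2] at e1 e2 eg1 eg2
  -- Schwarz-Pick
  obtain ⟨hc1, hc2⟩ := schwarz_pick2 u huN (fun z hz => humap z hz) hu0
  obtain ⟨hd1b, hd2b⟩ := schwarz_pick2 v hvN (fun z hz => hvmap z hz) hv0
  have hB₁ne : (B₁:ℂ) ≠ 0 := by exact_mod_cast hB₁pos.ne'
  -- D1 = -C1
  have hD1 : deriv v 0 = - deriv u 0 := by
    have h0 : 2*(B₁:ℂ)*(deriv u 0 + deriv v 0) = 0 := by
      linear_combination (-1)*e1 - eg1 + (1+(α:ℂ))*r2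
    rcases mul_eq_zero.mp h0 with h | h
    · exact absurd h (by simp [hB₁ne])
    · linear_combination h
  -- rewrite the g-side equation
  rw [r2, r3, hD1] at eg2
  -- the master identity
  set A2 := deriv (deriv f) 0 with hA2
  set C1 := deriv u 0 with hC1
  set C2 := deriv (deriv u) 0 with hC2
  set D2 := deriv (deriv v) 0 with hD2
  have T : (1+(α:ℂ))*((B₁:ℂ)^2 - (1+(α:ℂ))*(B₂:ℂ))*A2^2 = (B₁:ℂ)^3*(C2+D2) := by
    linear_combination ((B₁:ℂ)^2/3)*e2 + ((B₁:ℂ)^2/3)*eg2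
      + (-(3*(B₁:ℂ)^2+(1+(α:ℂ))*(B₂:ℂ))*A2 - 2*(B₂:ℂ)*(B₁:ℂ)*C1)*e1
  -- pass to norms
  set t := ‖A2‖ with ht
  set c := ‖C1‖ with hc
  have hnT : (1+α) * |B₁^2 - (1+α)*B₂| * t^2 = B₁^3 * ‖C2+D2‖ := by
    have h := congrArg norm T
    rw [show (1+(α:ℂ))*((B₁:ℂ)^2 - (1+(α:ℂ))*(B₂:ℂ))*A2^2
        = (((1+α)*(B₁^2-(1+α)*B₂) : ℝ) : ℂ) * A2^2 by push_cast; ring] at h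
    rw [norm_mul, norm_mul, Complex.norm_real, norm_pow, norm_pow, Complex.norm_real] at h
    rw [Real.norm_eq_abs, Real.norm_eq_abs, abs_mul,
      _root_.abs_of_nonneg (by linarith : (0:ℝ) ≤ 1+α), _root_.abs_of_nonneg hB₁pos.le] at h
    exact h
  have hne1n : (1+α) * t = 2*B₁*c := by
    have h := congrArg norm e1
    rw [norm_mul, norm_mul, norm_mul] at h
    rw [show ‖(1+(α:ℂ))‖ = 1+α by
        rw [show (1+(α:ℂ)) = ((1+α : ℝ) : ℂ) by push_cast; ring, Complex.norm_real,
          Real.norm_eq_abs, _root_.abs_of_nonneg (by linarith)],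
      show ‖(2:ℂ)‖ = 2 by simp,
      show ‖(B₁:ℂ)‖ = B₁ by rw [Complex.norm_real, Real.norm_eq_abs,
        _root_.abs_of_nonneg hB₁pos.le]] at h
    linarith [h]
  have hd2b' : ‖D2‖ ≤ 2 * (1 - c^2) := by
    rw [hD2]
    have : ‖deriv v 0‖ = c := by rw [hD1, norm_neg, hc]
    rw [this] at hd2b
    exact hd2b
  have hc2' : ‖C2‖ ≤ 2 * (1 - c^2) := hc2
  have hsum : ‖C2 + D2‖ ≤ ‖C2‖ + ‖D2‖ := norm_add_le _ _
  -- key real inequality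
  have hXb : |B₁^2 + (1+α)*(B₁-B₂)| ≤ |B₁^2 - (1+α)*B₂| + (1+α)*B₁ := by
    have hX : B₁^2 + (1+α)*(B₁-B₂) = (B₁^2 - (1+α)*B₂) + (1+α)*B₁ := by ring
    have h1 : |(B₁^2 - (1+α)*B₂) + (1+α)*B₁| ≤ |B₁^2 - (1+α)*B₂| + |(1+α)*B₁| := abs_add_le _ _
    have h2 : |(1+α)*B₁| = (1+α)*B₁ :=
      _root_.abs_of_nonneg (mul_nonneg (by linarith) hB₁pos.le)
    rw [hX]
    linarith
  have hcsq : 4*B₁^2*c^2 = (1+α)^2*t^2 := by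
    have h := congrArg (fun x : ℝ => x^2) hne1n
    nlinarith [h]
  have hmain : (1+α) * |B₁^2 + (1+α)*(B₁-B₂)| * t^2 ≤ 4*B₁^3 := by
    have h1 : (1+α) * |B₁^2 - (1+α)*B₂| * t^2 ≤ B₁^3 * (4 - 4*c^2) := by
      rw [hnT]
      have : ‖C2+D2‖ ≤ 4 - 4*c^2 := by linarith
      nlinarith [pow_pos hB₁pos 3]
    have h2 : (1+α) * |B₁^2 + (1+α)*(B₁-B₂)| * t^2
        ≤ (1+α) * (|B₁^2 - (1+α)*B₂| + (1+α)*B₁) * t^2 := by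
      have := mul_le_mul_of_nonneg_left hXb (by linarith : (0:ℝ) ≤ 1+α)
      nlinarith [sq_nonneg t]
    have e3 : (1+α) * (|B₁^2 - (1+α)*B₂| + (1+α)*B₁) * t^2
        = (1+α) * |B₁^2 - (1+α)*B₂| * t^2 + B₁*((1+α)^2*t^2) := by ring
    have e4 : B₁*((1+α)^2*t^2) = 4*B₁^3*c^2 := by rw [← hcsq]; ring
    have e5 : B₁^3 * (4 - 4*c^2) + 4*B₁^3*c^2 = 4*B₁^3 := by ring
    linarith [h1, h2, e3, e4, e5]
  -- finish
  have htcv : tc f 2 = A2/2 := by rw [tc, it2, ← hA2]; norm_num [Nat.factorial]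
  have htc : ‖tc f 2‖ = t/2 := by rw [htcv, norm_div, ht]; norm_num
  rw [htc]
  set X := (1+α) * |B₁^2 + (1+α)*(B₁-B₂)| with hXdef
  have hXpos : 0 < X := by
    apply mul_pos (by linarith)
    exact abs_pos.mpr hne
  have htnn : (0:ℝ) ≤ t := by rw [ht]; positivity
  have hsq2 : (t/2)^2 ≤ B₁^3 / X := by
    rw [div_pow, le_div_iff₀ hXpos]
    linarith [hmain]
  have hfin : t/2 ≤ Real.sqrt (B₁^3 / X) := Real.le_sqrt_of_sq_le hsq2
  calc t/2 ≤ Real.sqrt (B₁^3 / X) := hfin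
    _ = B₁ * Real.sqrt B₁ / Real.sqrt X := by
        rw [Real.sqrt_div (by positivity) X]
        congr 1
        rw [show B₁^3 = B₁^2 * B₁ by ring, Real.sqrt_mul (sq_nonneg B₁),
          Real.sqrt_sq hB₁pos.le]
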